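/- arXiv:2109.00306 — 2 statements merged into one kernel-verified Lean document; each statement's English description precedes it below -/
import Mathlib

section
/- Let Q be a convex set of probability measures equivalent to P that is stable under pasting, with derivative set D_T, and for each t let D̄_t := { E^P[D_T | F_t] : D_T ∈ D̄_T } where D̄_T is the L^1-closure of D_T. Then for each t, D̄_t is convex and closed in L^1(F_T, P). -/
set_option maxHeartbeats 2000000
set_option synthInstance.maxHeartbeats 400000


open MeasureTheory
open Filter Topology
open scoped ENNReal NNReal

section AuxLemmas

namespace StmtAux

open Filter Topology
open scoped ENNReal NNReal

variable {α : Type*} {mt : MeasurableSpace α} {mα : MeasurableSpace α} {P : Measure α}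

/-- Monotone-approximation integrability criterion. -/
lemma integrable_of_monotone_approx {v : α → ℝ} {c : ℕ → α → ℝ} {B : ℝ}
    (hv : AEStronglyMeasurable v P)
    (hc : ∀ n, Integrable (c n) P) (hc0 : ∀ n, 0 ≤ᵐ[P] c n)
    (hmono : ∀ᵐ ω ∂P, Monotone fun n => c n ω)
    (hlim : ∀ᵐ ω ∂P, Tendsto (fun n => c n ω) atTop (𝓝 (v ω)))
    (hB : ∀ n, ∫ ω, c n ω ∂P ≤ B) : Integrable v P := by
  have hv0 : 0 ≤ᵐ[P] v := by
    filter_upwards [ae_all_iff.2 hc0, hlim] with ω h0 hl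
    exact ge_of_tendsto' hl fun n => h0 n
  have hlin : Tendsto (fun n => ∫⁻ ω, ENNReal.ofReal (c n ω) ∂P) atTop
      (𝓝 (∫⁻ ω, ENNReal.ofReal (v ω) ∂P)) := by
    refine lintegral_tendsto_of_tendsto_of_monotone
      (fun n => (hc n).aemeasurable.ennreal_ofReal) ?_ ?_
    · filter_upwards [hmono] with ω hω n k hnk
      exact ENNReal.ofReal_le_ofReal (hω hnk)
    · filter_upwards [hlim] with ω hω
      exact (ENNReal.continuous_ofReal.tendsto _).comp hω
  have hbound : ∫⁻ ω, ENNReal.ofReal (v ω) ∂P ≤ ENNReal.ofReal B := by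
    refine le_of_tendsto' hlin fun n => ?_
    calc ∫⁻ ω, ENNReal.ofReal (c n ω) ∂P = ENNReal.ofReal (∫ ω, c n ω ∂P) :=
          (ofReal_integral_eq_lintegral_ofReal (hc n) (hc0 n)).symm
      _ ≤ ENNReal.ofReal B := ENNReal.ofReal_le_ofReal (hB n)
  refine ⟨hv, ?_⟩
  have heq : ∫⁻ ω, ‖v ω‖ₑ ∂P = ∫⁻ ω, ENNReal.ofReal (v ω) ∂P :=
    lintegral_congr_ae (hv0.mono fun ω hω => Real.enorm_eq_ofReal hω)
  rw [HasFiniteIntegral, heq]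
  exact lt_of_le_of_lt hbound ENNReal.ofReal_lt_top

/-- a.e. strict positivity of the conditional expectation of an a.e. positive function. -/
lemma condexp_ae_pos (hle : mt ≤ mα) [IsFiniteMeasure P] {f : α → ℝ}
    (hf : Integrable f P) (hf0 : ∀ᵐ ω ∂P, 0 < f ω) :
    ∀ᵐ ω ∂P, 0 < (P[f|mt]) ω := by
  set e : α → ℝ := P[f|mt] with he_def
  have hesm : StronglyMeasurable[mt] e := stronglyMeasurable_condExp
  set S : Set α := {ω | e ω ≤ 0} with hS_def
  have hSmt : MeasurableSet[mt] S := hesm.measurable measurableSet_Iic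
  have hS : MeasurableSet[mα] S := hle _ hSmt
  have h1 : ∫ ω in S, f ω ∂P = ∫ ω in S, e ω ∂P := (setIntegral_condExp hle hf hSmt).symm
  have h2 : ∫ ω in S, e ω ∂P ≤ 0 := by
    refine integral_nonpos_of_ae ?_
    filter_upwards [ae_restrict_mem hS] with ω hω
    exact hω
  have hPS : P S = 0 := by
    by_contra hne
    have hpos : 0 < ∫ ω in S, f ω ∂P := by
      rw [setIntegral_pos_iff_support_of_nonneg_ae
        (ae_restrict_of_ae (hf0.mono fun ω hω => hω.le)) hf.integrableOn]
      have hmono' : P S ≤ P (Function.support f ∩ S) := by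
        refine measure_mono_ae ?_
        filter_upwards [hf0] with ω hω
        exact fun hmem => ⟨fun h => absurd h (ne_of_gt hω), hmem⟩
      exact lt_of_lt_of_le (lt_of_le_of_ne zero_le (Ne.symm hne)) hmono'
    rw [h1] at hpos
    exact absurd (lt_of_lt_of_le hpos h2) (lt_irrefl 0)
  have : ∀ᵐ ω ∂P, ω ∉ S := by
    rw [ae_iff]
    simpa using hPS
  filter_upwards [this] with ω hω
  simpa [hS_def, not_le] using hω

/-- Weighted tower rule, nonnegative case. -/
lemma tower_nonneg (hle : mt ≤ mα) [IsFiniteMeasure P]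
    {w u : α → ℝ} (hw : Integrable w P) (hw0 : 0 ≤ᵐ[P] w)
    (hw1 : P[w|mt] =ᵐ[P] fun _ => (1 : ℝ))
    (hu : StronglyMeasurable[mt] u) (hui : Integrable u P) (hu0 : 0 ≤ᵐ[P] u) :
    Integrable (u * w) P ∧ ∫ ω, (u * w) ω ∂P = ∫ ω, u ω ∂P := by
  set b : ℕ → α → ℝ := fun n ω => max 0 (min (u ω) n) with hb_def
  set c : ℕ → α → ℝ := fun n => b n * w with hc_def
  have hb_sm : ∀ n : ℕ, StronglyMeasurable[mt] (b n) := fun n =>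
    (measurable_const.max (hu.measurable.min measurable_const)).stronglyMeasurable
  have hb_bdd : ∀ n : ℕ, ∀ ω, ‖b n ω‖ ≤ (n : ℝ) := by
    intro n ω
    rw [Real.norm_eq_abs, abs_of_nonneg (le_max_left _ _)]
    exact max_le (Nat.cast_nonneg n) (min_le_right _ _)
  have hb_int : ∀ n : ℕ, Integrable (b n) P := by
    intro n
    refine hui.mono ((hb_sm n).mono hle).aestronglyMeasurable ?_
    filter_upwards [hu0] with ω hω
    rw [Real.norm_eq_abs, abs_of_nonneg (le_max_left _ _), Real.norm_eq_abs]
    exact max_le (abs_nonneg _) ((min_le_left _ _).trans (le_abs_self _))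
  have hc_int : ∀ n, Integrable (c n) P := fun n =>
    hw.bdd_mul ((hb_sm n).mono hle).aestronglyMeasurable (Eventually.of_forall (hb_bdd n))
  have hc0 : ∀ n, 0 ≤ᵐ[P] c n := by
    intro n
    filter_upwards [hw0] with ω hω
    exact mul_nonneg (le_max_left _ _) hω
  have hmono : ∀ᵐ ω ∂P, Monotone fun n => c n ω := by
    filter_upwards [hw0] with ω hω n k hnk
    exact mul_le_mul_of_nonneg_right
      (max_le_max le_rfl (min_le_min le_rfl (Nat.cast_le.2 hnk))) hω
  have hlim : ∀ᵐ ω ∂P, Tendsto (fun n => c n ω) atTop (𝓝 ((u * w) ω)) := by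
    filter_upwards [hu0] with ω hω
    have hω' : (0 : ℝ) ≤ u ω := hω
    refine tendsto_atTop_of_eventually_const (i₀ := ⌈u ω⌉₊) fun n hn => ?_
    have h1 : min (u ω) n = u ω := min_eq_left ((Nat.le_ceil _).trans (Nat.cast_le.2 hn))
    simp only [hc_def, hb_def, Pi.mul_apply, h1, max_eq_right hω']
  have hpull : ∀ n, ∫ ω, c n ω ∂P = ∫ ω, b n ω ∂P := by
    intro n
    have h := condExp_mul_of_stronglyMeasurable_left (μ := P) (hb_sm n) (hc_int n) hw
    rw [← integral_condExp (μ := P) (f := c n) hle, integral_congr_ae h]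
    refine integral_congr_ae ?_
    filter_upwards [hw1] with ω hω
    simp [hω]
  have huw_meas : AEStronglyMeasurable (u * w) P :=
    ((hu.mono hle).aestronglyMeasurable).mul hw.1
  have hbu : ∀ n, ∫ ω, b n ω ∂P ≤ ∫ ω, u ω ∂P := by
    intro n
    refine integral_mono_ae (hb_int n) hui ?_
    filter_upwards [hu0] with ω hω
    exact max_le hω (min_le_left _ _)
  have hint : Integrable (u * w) P := by
    refine integrable_of_monotone_approx huw_meas hc_int hc0 hmono hlim (B := ∫ ω, u ω ∂P) ?_
    intro n; rw [hpull n]; exact hbu n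
  refine ⟨hint, ?_⟩
  have hlim1 : Tendsto (fun n => ∫ ω, c n ω ∂P) atTop (𝓝 (∫ ω, (u * w) ω ∂P)) :=
    integral_tendsto_of_tendsto_of_monotone hc_int hint hmono hlim
  have hlim2 : Tendsto (fun n => ∫ ω, b n ω ∂P) atTop (𝓝 (∫ ω, u ω ∂P)) := by
    refine integral_tendsto_of_tendsto_of_monotone hb_int hui ?_ ?_
    · exact Eventually.of_forall fun ω n k hnk =>
        max_le_max le_rfl (min_le_min le_rfl (Nat.cast_le.2 hnk))
    · filter_upwards [hu0] with ω hω
      have hω' : (0 : ℝ) ≤ u ω := hω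
      refine tendsto_atTop_of_eventually_const (i₀ := ⌈u ω⌉₊) fun n hn => ?_
      simp [hb_def, min_eq_left ((Nat.le_ceil _).trans (Nat.cast_le.2 hn)), max_eq_right hω']
  simp_rw [hpull] at hlim1
  exact tendsto_nhds_unique hlim1 hlim2

/-- Weighted tower rule, general case. -/
lemma tower (hle : mt ≤ mα) [IsFiniteMeasure P]
    {w : α → ℝ} (hw : Integrable w P) (hw0 : 0 ≤ᵐ[P] w)
    (hw1 : P[w|mt] =ᵐ[P] fun _ => (1 : ℝ))
    {u : α → ℝ} (hu : StronglyMeasurable[mt] u) (hui : Integrable u P) :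
    Integrable (u * w) P ∧ (P[(u * w)|mt] =ᵐ[P] u) ∧
      (∫ ω, |(u * w) ω| ∂P = ∫ ω, |u ω| ∂P) ∧ ∫ ω, (u * w) ω ∂P = ∫ ω, u ω ∂P := by
  have habs_sm : StronglyMeasurable[mt] fun ω => |u ω| := by
    have h1 : Measurable[mt] fun ω => max (u ω) (-u ω) := hu.measurable.max hu.measurable.neg
    have := h1.stronglyMeasurable
    simpa only [← abs_eq_max_neg] using this
  have habs := tower_nonneg hle hw hw0 hw1 habs_sm hui.abs
    (Eventually.of_forall fun ω => abs_nonneg _)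
  obtain ⟨hai, heq⟩ := habs
  have huwm : AEStronglyMeasurable (u * w) P := ((hu.mono hle).aestronglyMeasurable).mul hw.1
  have hptw : ∀ᵐ ω ∂P, |(u * w) ω| = ((fun ω => |u ω|) * w) ω := by
    filter_upwards [hw0] with ω hω
    simp only [Pi.mul_apply, abs_mul, abs_of_nonneg hω]
  have hint : Integrable (u * w) P := by
    refine hai.mono huwm ?_
    filter_upwards [hptw] with ω hω
    rw [Real.norm_eq_abs, hω, Real.norm_eq_abs]
    exact le_abs_self _
  have hcond : P[u * w|mt] =ᵐ[P] u := by
    refine (condExp_mul_of_stronglyMeasurable_left hu hint hw).trans ?_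
    filter_upwards [hw1] with ω hω
    simp only [Pi.mul_apply, hω]
    exact mul_one _
  have habs_eq : ∫ ω, |(u * w) ω| ∂P = ∫ ω, |u ω| ∂P := by
    rw [← heq]
    exact integral_congr_ae hptw
  have hie : ∫ ω, (u * w) ω ∂P = ∫ ω, u ω ∂P := by
    rw [← integral_condExp (μ := P) (f := u * w) hle]
    exact integral_congr_ae hcond
  exact ⟨hint, hcond, habs_eq, hie⟩

end StmtAux

end AuxLemmas


variable {Ω : Type*} {m : MeasurableSpace Ω}

/-- `Q3` is the pasting of `Q1` and `Q2` in the stopping time `τ`. -/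
def PastingOf (ℱ : Filtration ℕ m) (Q1 Q2 Q3 : Measure Ω)
    (τ : Ω → ℕ) (hτ : IsStoppingTime ℱ (fun ω => (τ ω : WithTop ℕ))) : Prop :=
  ∀ A : Set Ω, MeasurableSet A →
    (Q3 A).toReal = ∫ ω, (Q2[A.indicator (fun _ => (1 : ℝ)) | hτ.measurableSpace]) ω ∂Q1

/-- Stability under pasting. -/
def StableUnderPasting (ℱ : Filtration ℕ m) (T : ℕ) (𝒬 : Set (Measure Ω)) : Prop :=
  ∀ Q1 ∈ 𝒬, ∀ Q2 ∈ 𝒬, ∀ (τ : Ω → ℕ) (hτ : IsStoppingTime ℱ (fun ω => (τ ω : WithTop ℕ))), (∀ ω, τ ω ≤ T) →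
    ∀ Q3 : Measure Ω, IsProbabilityMeasure Q3 → PastingOf ℱ Q1 Q2 Q3 τ hτ → Q3 ∈ 𝒬

/-- Convexity of a set of measures. -/
def ConvexMeasures (𝒬 : Set (Measure Ω)) : Prop :=
  ∀ Q1 ∈ 𝒬, ∀ Q2 ∈ 𝒬, ∀ c : NNReal, c ≤ 1 → (c • Q1 + (1 - c) • Q2) ∈ 𝒬

/-- For a convex, pasting-stable set `𝒬` of probability measures equivalent to `P` with
derivative set `D_T ⊂ L¹(P)`, the sets `D̄_t = { E^P[D | F_t] : D ∈ closure D_T }` are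
convex and closed in `L¹(F_T, P)` for each `t`. -/
theorem stmt_3 (P : Measure Ω) [IsProbabilityMeasure P]
    (T : ℕ) (ℱ : Filtration ℕ m) (hℱT : ℱ T = m)
    (𝒬 : Set (Measure Ω))
    (h𝒬prob : ∀ Q ∈ 𝒬, IsProbabilityMeasure Q)
    (h𝒬equiv : ∀ Q ∈ 𝒬, Q ≪ P ∧ P ≪ Q)
    (h𝒬conv : ConvexMeasures 𝒬)
    (h𝒬stable : StableUnderPasting ℱ T 𝒬)
    (DT : Set (Lp ℝ 1 P))
    (hDT : ∀ f : Lp ℝ 1 P,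
      f ∈ DT ↔ ∃ Q ∈ 𝒬, (f : Ω → ℝ) =ᵐ[P] fun ω => (Q.rnDeriv P ω).toReal)
    -- `D̄_t`: conditional expectations given `ℱ t` of elements of the `L¹`-closure of `D_T`
    (Dbar : ℕ → Set (Lp ℝ 1 P))
    (hDbar : ∀ t, ∀ g : Lp ℝ 1 P,
      g ∈ Dbar t ↔ ∃ f ∈ closure DT, (g : Ω → ℝ) =ᵐ[P] P[(f : Ω → ℝ) | ℱ t]) :
    ∀ t ≤ T, Convex ℝ (Dbar t) ∧ IsClosed (Dbar t) := by
  intro t ht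
  have hle : ℱ t ≤ m := ℱ.le t
  haveI htrim : SigmaFinite (P.trim hle) := inferInstance
  set Λ := condExpL1CLM ℝ hle P with hΛ_def
  have hΛcoe : ∀ x : Lp ℝ 1 P, (Λ x : Ω → ℝ) =ᵐ[P] P[(x : Ω → ℝ)|ℱ t] := by
    intro x
    have h := condExp_ae_eq_condExpL1CLM (μ := P) hle (L1.integrable_coeFn x)
    rw [Integrable.toL1_coeFn] at h
    exact h.symm
  have hset : Dbar t = Λ '' closure DT := by
    ext g
    rw [hDbar t g]
    constructor
    · rintro ⟨f, hf, hae⟩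
      exact ⟨f, hf, Lp.ext ((hΛcoe f).trans hae.symm)⟩
    · rintro ⟨f, hf, rfl⟩
      exact ⟨f, hf, hΛcoe f⟩
  have hDTconv : Convex ℝ DT := by
    intro f1 h1 f2 h2 a b ha hb hab
    obtain ⟨Q1, hQ1, hd1⟩ := (hDT f1).1 h1
    obtain ⟨Q2, hQ2, hd2⟩ := (hDT f2).1 h2
    haveI := h𝒬prob Q1 hQ1
    haveI := h𝒬prob Q2 hQ2
    have ha1 : a ≤ 1 := by linarith
    set c : ℝ≥0 := ⟨a, ha⟩ with hc_def
    have hc1 : c ≤ 1 := by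
      rw [← NNReal.coe_le_coe]; exact ha1
    refine (hDT _).2 ⟨c • Q1 + (1 - c) • Q2, h𝒬conv Q1 hQ1 Q2 hQ2 c hc1, ?_⟩
    have hcoe1 : ((1 - c : ℝ≥0) : ℝ) = b := by
      rw [NNReal.coe_sub hc1]
      simp only [NNReal.coe_one, hc_def, NNReal.coe_mk]
      change (1 : ℝ) - a = b
      linarith
    have hadd := Measure.rnDeriv_add (c • Q1) ((1 - c) • Q2) P
    have hs1 := Measure.rnDeriv_smul_left Q1 P c
    have hs2 := Measure.rnDeriv_smul_left Q2 P (1 - c)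
    filter_upwards [hadd, hs1, hs2, hd1, hd2, Measure.rnDeriv_lt_top Q1 P,
      Measure.rnDeriv_lt_top Q2 P, Lp.coeFn_add (a • f1) (b • f2),
      Lp.coeFn_smul a f1, Lp.coeFn_smul b f2] with ω k1 k2 k3 k4 k5 k6 k7 k8 k9 k10
    rw [k8, Pi.add_apply, k9, k10, Pi.smul_apply, Pi.smul_apply, smul_eq_mul, smul_eq_mul,
      k4, k5, k1, Pi.add_apply, k2, k3, Pi.smul_apply, Pi.smul_apply]
    rw [ENNReal.smul_def, ENNReal.smul_def, smul_eq_mul, smul_eq_mul, ENNReal.toReal_add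
      (ENNReal.mul_ne_top ENNReal.coe_ne_top k6.ne) (ENNReal.mul_ne_top ENNReal.coe_ne_top k7.ne),
      ENNReal.toReal_mul, ENNReal.toReal_mul, ENNReal.coe_toReal, ENNReal.coe_toReal, hcoe1]
    rfl
  refine ⟨by rw [hset]; simpa using hDTconv.closure.linear_image Λ.toLinearMap, ?_⟩
  by_cases hDTe : DT = ∅
  · rw [hset, hDTe]
    simp
  obtain ⟨f0, hf0DT⟩ := Set.nonempty_iff_ne_empty.2 hDTe
  obtain ⟨Q0, hQ0, hf0⟩ := (hDT f0).1 hf0DT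
  haveI := h𝒬prob Q0 hQ0
  have hQ0P : Q0 ≪ P := (h𝒬equiv Q0 hQ0).1
  have hPQ0 : P ≪ Q0 := (h𝒬equiv Q0 hQ0).2
  have hf0int : Integrable ((f0 : Ω → ℝ)) P := L1.integrable_coeFn f0
  have hf0pos : ∀ᵐ ω ∂P, 0 < (f0 : Ω → ℝ) ω := by
    filter_upwards [hf0, Measure.rnDeriv_pos' hPQ0, Measure.rnDeriv_lt_top Q0 P]
      with ω k1 k2 k3
    rw [k1]
    exact ENNReal.toReal_pos k2.ne' k3.ne
  set e0 : Ω → ℝ := P[(f0 : Ω → ℝ)|ℱ t] with he0_def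
  have he0sm : StronglyMeasurable[ℱ t] e0 := stronglyMeasurable_condExp
  have he0pos : ∀ᵐ ω ∂P, 0 < e0 ω := StmtAux.condexp_ae_pos hle hf0int hf0pos
  set w : Ω → ℝ := (fun ω => (e0 ω)⁻¹) * (f0 : Ω → ℝ) with hw_def
  have hw_meas : Measurable w :=
    ((he0sm.measurable.mono hle le_rfl).inv).mul (Lp.stronglyMeasurable f0).measurable
  have hwint : Integrable w P := by
    set b : ℕ → Ω → ℝ := fun n ω => max 0 (min (e0 ω)⁻¹ n) with hb_def
    have hb_sm : ∀ n : ℕ, StronglyMeasurable[ℱ t] (b n) := fun n =>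
      (measurable_const.max ((he0sm.measurable.inv).min measurable_const)).stronglyMeasurable
    have hb_bdd : ∀ n : ℕ, ∀ ω, ‖b n ω‖ ≤ (n : ℝ) := by
      intro n ω
      rw [Real.norm_eq_abs, abs_of_nonneg (le_max_left _ _)]
      exact max_le (Nat.cast_nonneg n) (min_le_right _ _)
    set c : ℕ → Ω → ℝ := fun n => b n * (f0 : Ω → ℝ) with hc_def
    have hc_int : ∀ n, Integrable (c n) P := fun n =>
      hf0int.bdd_mul ((hb_sm n).mono hle).aestronglyMeasurable (Eventually.of_forall (hb_bdd n))
    have hc0 : ∀ n, 0 ≤ᵐ[P] c n := by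
      intro n
      filter_upwards [hf0pos] with ω hω
      exact mul_nonneg (le_max_left _ _) hω.le
    have hmono : ∀ᵐ ω ∂P, Monotone fun n => c n ω := by
      filter_upwards [hf0pos] with ω hω n k hnk
      exact mul_le_mul_of_nonneg_right
        (max_le_max le_rfl (min_le_min le_rfl (Nat.cast_le.2 hnk))) hω.le
    have hlim : ∀ᵐ ω ∂P, Tendsto (fun n => c n ω) atTop (𝓝 (w ω)) := by
      filter_upwards [he0pos] with ω hω
      refine tendsto_atTop_of_eventually_const (i₀ := ⌈(e0 ω)⁻¹⌉₊) fun n hn => ?_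
      have h1 : min (e0 ω)⁻¹ n = (e0 ω)⁻¹ :=
        min_eq_left ((Nat.le_ceil _).trans (Nat.cast_le.2 hn))
      simp only [hc_def, hb_def, Pi.mul_apply, h1,
        max_eq_right (inv_nonneg.2 hω.le), hw_def]
    have hB : ∀ n, ∫ ω, c n ω ∂P ≤ 1 := by
      intro n
      have hpull := condExp_mul_of_stronglyMeasurable_left (μ := P) (hb_sm n) (hc_int n) hf0int
      rw [← integral_condExp (μ := P) (f := c n) hle, integral_congr_ae hpull]
      have hbe0int : Integrable (b n * e0) P :=
        integrable_condExp.bdd_mul ((hb_sm n).mono hle).aestronglyMeasurable (Eventually.of_forall (hb_bdd n))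
      calc ∫ ω, (b n * e0) ω ∂P ≤ ∫ _ω, (1 : ℝ) ∂P := by
            refine integral_mono_ae hbe0int (integrable_const 1) ?_
            filter_upwards [he0pos] with ω hω
            have hb1 : b n ω ≤ (e0 ω)⁻¹ :=
              max_le (inv_nonneg.2 hω.le) (min_le_left _ _)
            calc (b n * e0) ω = b n ω * e0 ω := rfl
              _ ≤ (e0 ω)⁻¹ * e0 ω := mul_le_mul_of_nonneg_right hb1 hω.le
              _ = 1 := inv_mul_cancel₀ hω.ne'
        _ = 1 := by simp
    exact StmtAux.integrable_of_monotone_approx hw_meas.aestronglyMeasurable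
      hc_int hc0 hmono hlim hB
  have hw0 : 0 ≤ᵐ[P] w := by
    filter_upwards [hf0pos, he0pos] with ω h1 h2
    exact mul_nonneg (inv_nonneg.2 h2.le) h1.le
  have hw1 : P[w|ℱ t] =ᵐ[P] fun _ => (1 : ℝ) := by
    have hsm : StronglyMeasurable[ℱ t] fun ω => (e0 ω)⁻¹ :=
      (he0sm.measurable.inv).stronglyMeasurable
    have h := condExp_mul_of_stronglyMeasurable_left (μ := P) hsm hwint hf0int
    refine h.trans ?_
    filter_upwards [he0pos] with ω hω
    exact inv_mul_cancel₀ hω.ne'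
  have hTower : ∀ x : Lp ℝ 1 P,
      Integrable ((P[(x : Ω → ℝ)|ℱ t]) * w) P ∧
        (P[(P[(x : Ω → ℝ)|ℱ t]) * w|ℱ t] =ᵐ[P] P[(x : Ω → ℝ)|ℱ t]) ∧
        (∫ ω, |((P[(x : Ω → ℝ)|ℱ t]) * w) ω| ∂P = ∫ ω, |(P[(x : Ω → ℝ)|ℱ t]) ω| ∂P) ∧
        ∫ ω, ((P[(x : Ω → ℝ)|ℱ t]) * w) ω ∂P = ∫ ω, (P[(x : Ω → ℝ)|ℱ t]) ω ∂P :=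
    fun x => StmtAux.tower hle hwint hw0 hw1 stronglyMeasurable_condExp integrable_condExp
  set Ψ : Lp ℝ 1 P → Lp ℝ 1 P := fun x => ((hTower x).1).toL1 _ with hΨ_def
  have hΨcoe : ∀ x, (Ψ x : Ω → ℝ) =ᵐ[P] (P[(x : Ω → ℝ)|ℱ t]) * w :=
    fun x => Integrable.coeFn_toL1 _
  have hΨlip : LipschitzWith 1 Ψ := by
    refine LipschitzWith.of_dist_le_mul fun x y => ?_
    rw [NNReal.coe_one, one_mul, dist_eq_norm, dist_eq_norm]
    have hsub : Ψ x - Ψ y = ((hTower x).1.sub (hTower y).1).toL1 _ :=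
      (Integrable.toL1_sub _ _ (hTower x).1 (hTower y).1).symm
    rw [hsub, L1.norm_eq_integral_norm]
    have hxy : ((P[(x : Ω → ℝ)|ℱ t]) * w - (P[(y : Ω → ℝ)|ℱ t]) * w : Ω → ℝ)
        =ᵐ[P] (P[((x - y : Lp ℝ 1 P) : Ω → ℝ)|ℱ t]) * w := by
      have h1 : P[((x - y : Lp ℝ 1 P) : Ω → ℝ)|ℱ t]
          =ᵐ[P] P[(x : Ω → ℝ)|ℱ t] - P[(y : Ω → ℝ)|ℱ t] :=
        (condExp_congr_ae (Lp.coeFn_sub x y)).trans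
          (condExp_sub (L1.integrable_coeFn x) (L1.integrable_coeFn y) _)
      filter_upwards [h1] with ω hω
      simp only [Pi.mul_apply, Pi.sub_apply, hω]
      ring
    calc ∫ ω, ‖(((hTower x).1.sub (hTower y).1).toL1 _ : Ω → ℝ) ω‖ ∂P
        = ∫ ω, |((P[((x - y : Lp ℝ 1 P) : Ω → ℝ)|ℱ t]) * w) ω| ∂P := by
          refine integral_congr_ae ?_
          filter_upwards [Integrable.coeFn_toL1 ((hTower x).1.sub (hTower y).1), hxy]
            with ω h1 h2
          rw [h1, Real.norm_eq_abs, h2]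
      _ = ∫ ω, |(P[((x - y : Lp ℝ 1 P) : Ω → ℝ)|ℱ t]) ω| ∂P := (hTower (x - y)).2.2.1
      _ ≤ ∫ ω, |((x - y : Lp ℝ 1 P) : Ω → ℝ) ω| ∂P := integral_abs_condExp_le _
      _ = ‖x - y‖ := by
          rw [L1.norm_eq_integral_norm]
          exact integral_congr_ae (Eventually.of_forall fun ω => (Real.norm_eq_abs _).symm)
  -- the pasting step : Ψ maps DT into DT
  have hΨDT : ∀ f ∈ DT, Ψ f ∈ DT := by
    intro f hfDT
    obtain ⟨Q1, hQ1, hfd⟩ := (hDT f).1 hfDT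
    haveI := h𝒬prob Q1 hQ1
    have hQ1P : Q1 ≪ P := (h𝒬equiv Q1 hQ1).1
    set u : Ω → ℝ := P[(f : Ω → ℝ)|ℱ t] with hu_def
    have hfnn : 0 ≤ᵐ[P] (f : Ω → ℝ) := by
      filter_upwards [hfd] with ω hω
      rw [hω]; exact ENNReal.toReal_nonneg
    have hu0 : 0 ≤ᵐ[P] u := condExp_nonneg hfnn
    have huwint : Integrable (u * w) P := (hTower f).1
    have huw0 : 0 ≤ᵐ[P] u * w := by
      filter_upwards [hu0, hw0] with ω h1 h2
      exact mul_nonneg h1 h2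
    have humeas : Measurable (u * w) :=
      ((stronglyMeasurable_condExp.measurable.mono hle le_rfl)).mul hw_meas
    set dens : Ω → ℝ≥0∞ := fun ω => ENNReal.ofReal ((u * w) ω) with hdens_def
    have hdens_meas : Measurable dens := humeas.ennreal_ofReal
    set Q3 : Measure Ω := P.withDensity dens with hQ3_def
    have hint1 : ∫ ω, (u * w) ω ∂P = 1 := by
      rw [(hTower f).2.2.2, integral_condExp hle, integral_congr_ae hfd,
        Measure.integral_toReal_rnDeriv hQ1P, probReal_univ]
    haveI hQ3prob : IsProbabilityMeasure Q3 := by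
      constructor
      rw [hQ3_def, withDensity_apply _ MeasurableSet.univ, Measure.restrict_univ,
        ← ofReal_integral_eq_lintegral_ofReal huwint huw0, hint1, ENNReal.ofReal_one]
    have hτ : IsStoppingTime ℱ (fun _ : Ω => ((t : ℕ) : WithTop ℕ)) := isStoppingTime_const ℱ t
    have hpaste : PastingOf ℱ Q1 Q0 Q3 (fun _ => t) hτ := by
      intro A hA
      have hms : hτ.measurableSpace = ℱ t := IsStoppingTime.measurableSpace_const ℱ t
      rw [hms]
      haveI : SigmaFinite (Q0.trim hle) := inferInstance
      set k : Ω → ℝ := Q0[A.indicator (fun _ => (1 : ℝ))|ℱ t] with hk_def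
      have hind_int : Integrable (A.indicator fun _ => (1 : ℝ)) Q0 :=
        (integrable_const (1 : ℝ)).indicator hA
      have hk_sm : StronglyMeasurable[ℱ t] k := stronglyMeasurable_condExp
      have hk0 : 0 ≤ᵐ[Q0] k :=
        condExp_nonneg (Eventually.of_forall fun ω =>
          Set.indicator_nonneg (fun _ _ => zero_le_one) ω)
      have hk1 : k ≤ᵐ[Q0] fun _ => (1 : ℝ) := by
        refine (condExp_mono hind_int (integrable_const 1)
          (Eventually.of_forall fun ω =>
            Set.indicator_le_self' (fun _ _ => zero_le_one) ω)).trans ?_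
        exact Eventually.of_forall fun ω => (congrFun (condExp_const (μ := Q0) hle (1 : ℝ)) ω).le
      have hk_bdd : ∀ᵐ ω ∂P, ‖k ω‖ ≤ 1 := by
        have h := hPQ0.ae_le (hk0.and hk1)
        filter_upwards [h] with ω hω
        rw [Real.norm_eq_abs, abs_le]
        exact ⟨le_trans (by norm_num) hω.1, hω.2⟩
      -- LHS
      have hQ3A : (Q3 A).toReal = ∫ ω in A, (u * w) ω ∂P := by
        rw [hQ3_def, withDensity_apply _ hA,
          ← ofReal_integral_eq_lintegral_ofReal huwint.integrableOn
            (ae_restrict_of_ae huw0),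
          ENNReal.toReal_ofReal (integral_nonneg_of_ae (ae_restrict_of_ae huw0))]
      rw [hQ3A]
      -- RHS chain
      have hkf_int : Integrable (k * (f : Ω → ℝ)) P :=
        (L1.integrable_coeFn f).bdd_mul ((hk_sm.mono hle).aestronglyMeasurable) hk_bdd
      have step1 : ∫ ω, k ω ∂Q1 = ∫ ω, (Q1.rnDeriv P ω).toReal • k ω ∂P :=
        (integral_rnDeriv_smul hQ1P).symm
      have step2 : ∫ ω, (Q1.rnDeriv P ω).toReal • k ω ∂P = ∫ ω, (k * (f : Ω → ℝ)) ω ∂P := by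
        refine integral_congr_ae ?_
        filter_upwards [hfd] with ω hω
        rw [Pi.mul_apply, smul_eq_mul, hω, mul_comm]
      have hpull1 : P[k * (f : Ω → ℝ)|ℱ t] =ᵐ[P] k * u :=
        condExp_mul_of_stronglyMeasurable_left hk_sm hkf_int (L1.integrable_coeFn f)
      have step3 : ∫ ω, (k * (f : Ω → ℝ)) ω ∂P = ∫ ω, (k * u) ω ∂P := by
        rw [← integral_condExp (μ := P) (f := k * (f : Ω → ℝ)) hle]
        exact integral_congr_ae hpull1
      have hku_sm : StronglyMeasurable[ℱ t] (k * u) := hk_sm.mul stronglyMeasurable_condExp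
      have hku_int : Integrable (k * u) P :=
        integrable_condExp.bdd_mul ((hk_sm.mono hle).aestronglyMeasurable) hk_bdd
      have step4 : ∫ ω, (k * u) ω ∂P = ∫ ω, ((k * u) * w) ω ∂P :=
        ((StmtAux.tower hle hwint hw0 hw1 hku_sm hku_int).2.2.2).symm
      set bb : Ω → ℝ := u * fun ω => (e0 ω)⁻¹ with hbb_def
      have hbb_sm : StronglyMeasurable[ℱ t] bb :=
        stronglyMeasurable_condExp.mul ((he0sm.measurable.inv).stronglyMeasurable)
      have hbbQ0 : Integrable bb Q0 := by
        refine (integrable_rnDeriv_smul_iff hQ0P).1 ?_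
        refine huwint.congr ?_
        filter_upwards [hf0] with ω hω
        simp only [hw_def, hbb_def, Pi.mul_apply, smul_eq_mul, ← hω]
        ring
      have step5 : ∫ ω, ((k * u) * w) ω ∂P = ∫ ω, (k * bb) ω ∂Q0 := by
        rw [← integral_rnDeriv_smul hQ0P (f := k * bb)]
        refine integral_congr_ae ?_
        filter_upwards [hf0] with ω hω
        simp only [hw_def, hbb_def, Pi.mul_apply, smul_eq_mul, ← hω]
        ring
      have hbind_int : Integrable (bb * A.indicator fun _ => (1 : ℝ)) Q0 := by
        refine hbbQ0.mono (hbbQ0.1.mul hind_int.1) ?_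
        refine Eventually.of_forall fun ω => ?_
        rw [Pi.mul_apply, Real.norm_eq_abs, Real.norm_eq_abs, abs_mul]
        refine le_trans (mul_le_of_le_one_right (abs_nonneg _) ?_) le_rfl
        rw [abs_le]
        constructor
        · refine le_trans (by norm_num) (Set.indicator_nonneg (fun _ _ => zero_le_one) ω)
        · exact Set.indicator_le_self' (fun _ _ => zero_le_one) ω
      have hpull2 : Q0[bb * A.indicator fun _ => (1 : ℝ)|ℱ t] =ᵐ[Q0] bb * k :=
        condExp_mul_of_stronglyMeasurable_left hbb_sm hbind_int hind_int
      have step6 : ∫ ω, (k * bb) ω ∂Q0 = ∫ ω, (bb * A.indicator fun _ => (1 : ℝ)) ω ∂Q0 := by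
        rw [← integral_condExp (μ := Q0) (f := bb * A.indicator fun _ => (1 : ℝ)) hle,
          integral_congr_ae hpull2]
        exact integral_congr_ae (Eventually.of_forall fun ω => mul_comm _ _)
      have step7 : ∫ ω, (bb * A.indicator fun _ => (1 : ℝ)) ω ∂Q0 = ∫ ω in A, (u * w) ω ∂P := by
        rw [← integral_rnDeriv_smul hQ0P (f := bb * A.indicator fun _ => (1 : ℝ)),
          ← integral_indicator hA]
        refine integral_congr_ae ?_
        filter_upwards [hf0] with ω hω
        by_cases hmem : ω ∈ A
        · simp only [hw_def, hbb_def, Pi.mul_apply, smul_eq_mul, ← hω,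
            Set.indicator_of_mem hmem]
          ring
        · simp only [hw_def, hbb_def, Pi.mul_apply, smul_eq_mul,
            Set.indicator_of_notMem hmem]
          ring
      rw [step1, step2, step3, step4, step5, step6, step7]
    have hQ3mem : Q3 ∈ 𝒬 :=
      h𝒬stable Q1 hQ1 Q0 hQ0 (fun _ => t) hτ (fun _ => ht) Q3 hQ3prob hpaste
    refine (hDT (Ψ f)).2 ⟨Q3, hQ3mem, ?_⟩
    have hrn : Q3.rnDeriv P =ᵐ[P] dens := by
      rw [hQ3_def]
      exact Measure.rnDeriv_withDensity P hdens_meas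
    filter_upwards [hΨcoe f, hrn, huw0] with ω h1 h2 h3
    rw [h1, h2, hdens_def, ENNReal.toReal_ofReal h3]
  -- assembling the closedness proof
  have hΨclos : ∀ x ∈ closure DT, Ψ x ∈ closure DT := by
    intro x hx
    have h1 : Ψ '' closure DT ⊆ closure (Ψ '' DT) :=
      image_closure_subset_closure_image hΨlip.continuous
    have h2 : closure (Ψ '' DT) ⊆ closure DT := by
      refine closure_mono ?_
      rintro y ⟨z, hz, rfl⟩
      exact hΨDT z hz
    exact h2 (h1 ⟨x, hx, rfl⟩)
  have hΛΨ : ∀ x, Λ (Ψ x) = Λ x := by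
    intro x
    refine Lp.ext ((hΛcoe (Ψ x)).trans ?_)
    refine ((condExp_congr_ae (hΨcoe x)).trans ((hTower x).2.1)).trans ?_
    exact (hΛcoe x).symm
  have hΨcondeq : ∀ x y : Lp ℝ 1 P,
      P[(x : Ω → ℝ)|ℱ t] =ᵐ[P] P[(y : Ω → ℝ)|ℱ t] → Ψ x = Ψ y := by
    intro x y h
    refine Lp.ext ((hΨcoe x).trans (EventuallyEq.trans ?_ (hΨcoe y).symm))
    exact h.mul EventuallyEq.rfl
  have hΨΛ : ∀ y, Ψ (Λ y) = Ψ y := by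
    intro y
    refine hΨcondeq _ _ ?_
    exact (condExp_congr_ae (hΛcoe y)).trans (condExp_condExp_of_le le_rfl hle)
  have hΛΛ : ∀ y, Λ (Λ y) = Λ y := by
    intro y
    refine Lp.ext ((hΛcoe (Λ y)).trans ?_)
    exact ((condExp_congr_ae (hΛcoe y)).trans (condExp_condExp_of_le le_rfl hle)).trans
      (hΛcoe y).symm
  rw [hset]
  refine IsSeqClosed.isClosed ?_
  intro x g hxS hg
  have hΛx : ∀ n, Λ (x n) = x n := by
    intro n
    obtain ⟨f, hf, hfx⟩ := hxS n
    rw [← hfx, hΛΛ]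
  have hΛg : Λ g = g := by
    have h1 : Tendsto (fun n => Λ (x n)) atTop (𝓝 (Λ g)) :=
      (Λ.continuous.tendsto g).comp hg
    have h2 : Tendsto (fun n => Λ (x n)) atTop (𝓝 g) := by
      simp_rw [hΛx]; exact hg
    exact tendsto_nhds_unique h1 h2
  have hΨxn : ∀ n, Ψ (x n) ∈ closure DT := by
    intro n
    obtain ⟨f, hf, hfx⟩ := hxS n
    rw [← hfx, hΨΛ]
    exact hΨclos f hf
  have hΨg : Ψ g ∈ closure DT := by
    refine isClosed_closure.mem_of_tendsto ((hΨlip.continuous.tendsto g).comp hg) ?_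
    exact Eventually.of_forall hΨxn
  exact ⟨Ψ g, hΨg, by rw [hΛΨ g, hΛg]⟩
end

section
/- If Z ≥ 0 is Q-uniformly integrable for a set Q of probability measures equivalent to P and satisfying the law of iterated expectations property (sup_{Q∈Q} E^Q[esssup_{Q'∈Q} E^{Q'}_t[X]] = sup_{Q∈Q} E^Q[X] for Q-uniformly integrable X), then esssup_{Q∈Q} E^Q[Z | F_t] is itself a Q-uniformly integrable random variable. -/
open MeasureTheory
open Filter

variable {Ω : Type*} {m : MeasurableSpace Ω}

/-- `f` is `𝒬`-uniformly integrable: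
`lim_{K→∞} sup_{Q∈𝒬} E^Q[|f| 1{|f| ≥ K}] = 0`. -/
def QUnifInt (𝒬 : Set (Measure Ω)) (f : Ω → ℝ) : Prop :=
  ∀ ε > (0 : ℝ), ∃ K : ℝ, ∀ Q ∈ 𝒬, ∫ ω in {ω | K ≤ |f ω|}, |f ω| ∂Q ≤ ε

/-- `g` is an essential supremum (w.r.t. the `P`-a.e. order) of the family `f i`, `i ∈ S`. -/
def IsEssSupFam (P : Measure Ω) {ι : Type*} (S : Set ι) (f : ι → Ω → ℝ) (g : Ω → ℝ) : Prop :=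
  (∀ i ∈ S, f i ≤ᵐ[P] g) ∧ ∀ h : Ω → ℝ, (∀ i ∈ S, f i ≤ᵐ[P] h) → g ≤ᵐ[P] h

lemma exists_essSupFam {ι : Type*} (P : Measure Ω) [IsProbabilityMeasure P]
    (s : Set ι) (hs : s.Nonempty) (f : ι → Ω → ℝ) (c : ℝ) (hc : 0 ≤ c)
    (hmeas : ∀ i ∈ s, Measurable (f i))
    (hbd : ∀ i ∈ s, ∀ᵐ ω ∂P, f i ω ∈ Set.Icc 0 c) :
    ∃ g : Ω → ℝ, Measurable g ∧ (∀ ω, g ω ∈ Set.Icc 0 c) ∧ IsEssSupFam P s f g := by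
  classical
  -- clamped family
  set F : ι → Ω → ℝ := fun i ω => max 0 (min (f i ω) c) with hF
  have hFmeas : ∀ i ∈ s, Measurable (F i) := fun i hi =>
    measurable_const.max ((hmeas i hi).min measurable_const)
  have hFbd : ∀ i ω, F i ω ∈ Set.Icc 0 c := by
    intro i ω
    exact ⟨le_max_left _ _, max_le hc (min_le_right _ _)⟩
  have hFeq : ∀ i ∈ s, f i =ᵐ[P] F i := by
    intro i hi
    filter_upwards [hbd i hi] with ω hω
    simp only [hF]
    rw [min_eq_left hω.2, max_eq_right hω.1]
  -- admissible class
  set H : Set (Ω → ℝ) := {h | Measurable h ∧ (∀ ω, h ω ∈ Set.Icc 0 c) ∧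
      ∀ u : Ω → ℝ, (∀ i ∈ s, F i ≤ᵐ[P] u) → h ≤ᵐ[P] u} with hHdef
  have hHint : ∀ h ∈ H, Integrable h P := by
    intro h hh
    refine (integrable_const c).mono' hh.1.aestronglyMeasurable ?_
    filter_upwards with ω
    rw [Real.norm_eq_abs, abs_le]
    exact ⟨le_trans (by linarith) (hh.2.1 ω).1, (hh.2.1 ω).2⟩
  have hHle : ∀ h ∈ H, ∫ ω, h ω ∂P ≤ c := by
    intro h hh
    calc ∫ ω, h ω ∂P ≤ ∫ _, c ∂P :=
          integral_mono (hHint h hh) (integrable_const c) (fun ω => (hh.2.1 ω).2)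
      _ = c := by simp
  have hHmax : ∀ h₁ ∈ H, ∀ h₂ ∈ H, (fun ω => max (h₁ ω) (h₂ ω)) ∈ H := by
    intro h₁ hh₁ h₂ hh₂
    refine ⟨hh₁.1.max hh₂.1, fun ω => ⟨le_max_of_le_left (hh₁.2.1 ω).1,
      max_le (hh₁.2.1 ω).2 (hh₂.2.1 ω).2⟩, fun u hu => ?_⟩
    filter_upwards [hh₁.2.2 u hu, hh₂.2.2 u hu] with ω h1 h2
    exact max_le h1 h2
  obtain ⟨i₀, hi₀⟩ := hs
  have hFH : ∀ i ∈ s, F i ∈ H := fun i hi =>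
    ⟨hFmeas i hi, hFbd i, fun u hu => hu i hi⟩
  set J : Set ℝ := (fun h : Ω → ℝ => ∫ ω, h ω ∂P) '' H with hJdef
  have hJne : J.Nonempty := ⟨_, ⟨F i₀, hFH i₀ hi₀, rfl⟩⟩
  have hJbdd : BddAbove J := ⟨c, by rintro x ⟨h, hh, rfl⟩; exact hHle h hh⟩
  set r : ℝ := sSup J with hrdef
  -- choose a maximizing sequence
  have hseq : ∀ n : ℕ, ∃ h ∈ H, r - 1 / (n + 1) < ∫ ω, h ω ∂P := by
    intro n
    have : r - 1 / (n + 1) < r := by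
      have : (0:ℝ) < 1 / (n + 1) := by positivity
      linarith
    obtain ⟨x, ⟨h, hh, rfl⟩, hx⟩ := exists_lt_of_lt_csSup hJne this
    exact ⟨h, hh, hx⟩
  choose h hhH hhlt using hseq
  -- monotone maxima
  set G : ℕ → Ω → ℝ := fun n => Nat.rec (h 0) (fun n gn => fun ω => max (gn ω) (h (n + 1) ω)) n
    with hGdef
  have hGsucc : ∀ n, G (n + 1) = fun ω => max (G n ω) (h (n + 1) ω) := fun n => rfl
  have hGH : ∀ n, G n ∈ H := by
    intro n
    induction n with
    | zero => exact hhH 0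
    | succ n ih => rw [hGsucc]; exact hHmax _ ih _ (hhH (n + 1))
  have hGmono : ∀ ω, Monotone fun n => G n ω := by
    intro ω
    apply monotone_nat_of_le_succ
    intro n
    rw [hGsucc]
    exact le_max_left _ _
  have hhG : ∀ n ω, h n ω ≤ G n ω := by
    intro n ω
    cases n with
    | zero => exact le_rfl
    | succ n => rw [hGsucc]; exact le_max_right _ _
  have hGbdd : ∀ ω, BddAbove (Set.range fun n => G n ω) := by
    intro ω
    refine ⟨c, ?_⟩
    rintro x ⟨n, rfl⟩
    exact ((hGH n).2.1 ω).2
  set g : Ω → ℝ := fun ω => ⨆ n, G n ω with hgdef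
  have hGg : ∀ n ω, G n ω ≤ g ω := fun n ω => le_ciSup (hGbdd ω) n
  have hgbd : ∀ ω, g ω ∈ Set.Icc 0 c := by
    intro ω
    exact ⟨le_trans ((hGH 0).2.1 ω).1 (hGg 0 ω), ciSup_le fun n => ((hGH n).2.1 ω).2⟩
  have hgtendsto : ∀ ω, Tendsto (fun n => G n ω) atTop (nhds (g ω)) := fun ω =>
    tendsto_atTop_ciSup (hGmono ω) (hGbdd ω)
  have hgmeas : Measurable g := by
    apply measurable_of_tendsto_metrizable (fun n => (hGH n).1)
    rw [tendsto_pi_nhds]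
    exact hgtendsto
  have hgH : g ∈ H := by
    refine ⟨hgmeas, hgbd, fun u hu => ?_⟩
    have : ∀ᵐ ω ∂P, ∀ n, G n ω ≤ u ω := by
      rw [ae_all_iff]
      exact fun n => (hGH n).2.2 u hu
    filter_upwards [this] with ω hω
    exact ciSup_le hω
  -- ∫ g = r
  have hintG : Tendsto (fun n => ∫ ω, G n ω ∂P) atTop (nhds (∫ ω, g ω ∂P)) := by
    refine tendsto_integral_of_dominated_convergence (fun _ => c)
      (fun n => ((hGH n).1).aestronglyMeasurable) (integrable_const c) (fun n => ?_)
      (Eventually.of_forall hgtendsto)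
    filter_upwards with ω
    rw [Real.norm_eq_abs, abs_le]
    exact ⟨le_trans (by linarith) ((hGH n).2.1 ω).1, ((hGH n).2.1 ω).2⟩
  have hintGr : Tendsto (fun n => ∫ ω, G n ω ∂P) atTop (nhds r) := by
    have hlow : Tendsto (fun n : ℕ => r - 1 / (n + 1)) atTop (nhds r) := by
      have := tendsto_one_div_add_atTop_nhds_zero_nat (𝕜 := ℝ)
      have h2 := tendsto_const_nhds (x := r) (f := atTop (α := ℕ)) |>.sub this
      simpa using h2
    refine tendsto_of_tendsto_of_tendsto_of_le_of_le hlow tendsto_const_nhds ?_ ?_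
    · intro n
      exact le_trans (hhlt n).le (integral_mono (hHint _ (hhH n)) (hHint _ (hGH n)) (hhG n))
    · intro n
      exact le_csSup hJbdd ⟨G n, hGH n, rfl⟩
  have hgr : ∫ ω, g ω ∂P = r := tendsto_nhds_unique hintG hintGr
  -- g is an upper bound a.e.
  have hupper : ∀ i ∈ s, F i ≤ᵐ[P] g := by
    intro i hi
    set h' : Ω → ℝ := fun ω => max (g ω) (F i ω) with hh'
    have hh'H : h' ∈ H := hHmax g hgH (F i) (hFH i hi)
    have h1 : ∫ ω, h' ω ∂P ≤ r := le_csSup hJbdd ⟨h', hh'H, rfl⟩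
    have hd : (fun ω => h' ω - g ω) =ᵐ[P] 0 := by
      rw [← integral_eq_zero_iff_of_nonneg]
      · have heq := integral_sub (hHint _ hh'H) (hHint _ hgH)
        have h2 : r ≤ ∫ ω, h' ω ∂P :=
          hgr ▸ integral_mono (hHint _ hgH) (hHint _ hh'H) (fun ω => le_max_left _ _)
        rw [heq, hgr]
        linarith
      · intro ω
        simp only [hh', Pi.zero_apply, sub_nonneg]
        exact le_max_left _ _
      · exact (hHint _ hh'H).sub (hHint _ hgH)
    filter_upwards [hd] with ω hω
    have : h' ω = g ω := by
      have : h' ω - g ω = 0 := hω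
      linarith
    calc F i ω ≤ h' ω := le_max_right _ _
      _ = g ω := this
  refine ⟨g, hgmeas, hgbd, ⟨fun i hi => ?_, fun u hu => ?_⟩⟩
  · filter_upwards [hFeq i hi, hupper i hi] with ω h1 h2
    rw [h1]; exact h2
  · refine hgH.2.2 u fun i hi => ?_
    filter_upwards [hFeq i hi, hu i hi] with ω h1 h2
    rw [← h1]; exact h2

/-- If `Z ≥ 0` is `𝒬`-uniformly integrable for a set `𝒬` of probability measures
equivalent to `P` satisfying the law of iterated expectations property, then
`esssup_{Q∈𝒬} E^Q[Z | F_t]` is itself `𝒬`-uniformly integrable. -/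
theorem stmt_6 (P : Measure Ω) [IsProbabilityMeasure P]
    (T : ℕ) (ℱ : Filtration ℕ m) (hℱT : ℱ T = m) (t : ℕ) (ht : t ≤ T)
    (𝒬 : Set (Measure Ω))
    (h𝒬prob : ∀ Q ∈ 𝒬, IsProbabilityMeasure Q)
    (h𝒬equiv : ∀ Q ∈ 𝒬, Q ≪ P ∧ P ≪ Q)
    -- law of iterated expectations property for `𝒬`-uniformly integrable variables
    (hLIE : ∀ X : Ω → ℝ, QUnifInt 𝒬 X → (∀ Q ∈ 𝒬, Integrable X Q) →
      ∀ SX : Ω → ℝ, IsEssSupFam P 𝒬 (fun Q => Q[X | ℱ t]) SX →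
        (⨆ Q ∈ 𝒬, ∫ ω, SX ω ∂Q) = ⨆ Q ∈ 𝒬, ∫ ω, X ω ∂Q)
    (Z : Ω → ℝ) (hZmeas : Measurable Z) (hZnonneg : ∀ ω, 0 ≤ Z ω)
    (hZint : ∀ Q ∈ 𝒬, Integrable Z Q)
    (hZui : QUnifInt 𝒬 Z)
    (S : Ω → ℝ) (hS : IsEssSupFam P 𝒬 (fun Q => Q[Z | ℱ t]) S) :
    QUnifInt 𝒬 S := by
  classical
  intro ε hε
  rcases Set.eq_empty_or_nonempty 𝒬 with hQem | ⟨Q₀, hQ₀⟩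
  · exact ⟨0, fun Q hQ => absurd hQ (by simp [hQem])⟩
  have hmt : ℱ t ≤ m := ℱ.le t
  -- thresholds
  have hLex : ∀ j : ℕ, ∃ K : ℝ, ∀ Q ∈ 𝒬, ∫ ω in {ω | K ≤ |Z ω|}, |Z ω| ∂Q ≤ ε / 2 ^ (j + 2) :=
    fun j => hZui _ (by positivity)
  choose L hL using hLex
  set K : ℕ → ℝ := fun j => (Finset.range (j + 1)).sup' Finset.nonempty_range_add_one
    (fun i => max (L i) 0) with hKdef
  have hK0 : ∀ j, 0 ≤ K j := by
    intro j
    simp only [hKdef]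
    exact le_trans (le_max_right (L 0) 0)
      (Finset.le_sup' (fun i => max (L i) 0) (Finset.mem_range.mpr (by omega)))
  have hKL : ∀ j, L j ≤ K j := by
    intro j
    simp only [hKdef]
    exact le_trans (le_max_left _ _)
      (Finset.le_sup' (fun i => max (L i) 0) (Finset.self_mem_range_succ j))
  have hKmono : Monotone K := by
    intro a b hab
    simp only [hKdef]
    exact Finset.sup'_mono _ (Finset.range_subset_range.mpr (by omega)) _
  have htail : ∀ j, ∀ Q ∈ 𝒬, ∫ ω in {ω | K j ≤ |Z ω|}, |Z ω| ∂Q ≤ ε / 2 ^ (j + 2) := by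
    intro j Q hQ
    refine le_trans (setIntegral_mono_set ((hZint Q hQ).abs.integrableOn) ?_ ?_) (hL j Q hQ)
    · filter_upwards with ω using abs_nonneg _
    · exact Filter.Eventually.of_forall (fun ω hω => le_trans (hKL j) hω)
  -- truncation layers
  set pK : ℕ → ℝ := fun j => if j = 0 then 0 else K (j - 1) with hpKdef
  have hpK0 : ∀ j, 0 ≤ pK j := by
    intro j
    rw [hpKdef]
    dsimp only
    split_ifs
    · exact le_rfl
    · exact hK0 _
  have hpKle : ∀ j, pK j ≤ K j := by
    intro j
    cases j with
    | zero => simpa [hpKdef] using hK0 0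
    | succ j =>
      have : pK (j + 1) = K j := by simp [hpKdef]
      rw [this]
      exact hKmono (Nat.le_succ j)
  have hpKsucc : ∀ j, pK (j + 1) = K j := fun j => by simp [hpKdef]
  set X : ℕ → Ω → ℝ := fun j ω => min (Z ω) (K j) - min (Z ω) (pK j) with hXdef
  have hXmeas : ∀ j, Measurable (X j) :=
    fun j => (hZmeas.min measurable_const).sub (hZmeas.min measurable_const)
  have hXnonneg : ∀ j ω, 0 ≤ X j ω := fun j ω =>
    sub_nonneg.mpr (min_le_min le_rfl (hpKle j))
  have hXle : ∀ j ω, X j ω ≤ K j := by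
    intro j ω
    have h1 : min (Z ω) (K j) ≤ K j := min_le_right _ _
    have h2 : 0 ≤ min (Z ω) (pK j) := le_min (hZnonneg ω) (hpK0 j)
    simp only [hXdef]
    linarith
  have hXint : ∀ j, ∀ Q ∈ 𝒬, Integrable (X j) Q := by
    intro j Q hQ
    haveI := h𝒬prob Q hQ
    refine (integrable_const (K j)).mono' (hXmeas j).aestronglyMeasurable ?_
    filter_upwards with ω
    rw [Real.norm_eq_abs, abs_le]
    exact ⟨by linarith [hXnonneg j ω, hK0 j], hXle j ω⟩
  have hXui : ∀ j, QUnifInt 𝒬 (X j) := by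
    intro j ε' hε'
    refine ⟨K j + 1, fun Q hQ => ?_⟩
    have hempty : {ω | K j + 1 ≤ |X j ω|} = ∅ := by
      ext ω
      simp only [Set.mem_setOf_eq, Set.mem_empty_iff_false, iff_false, not_le]
      rw [abs_of_nonneg (hXnonneg j ω)]
      linarith [hXle j ω]
    rw [hempty, Measure.restrict_empty, integral_zero_measure]
    exact hε'.le
  -- per-layer integral bound
  have hXbound : ∀ j, ∀ Q ∈ 𝒬, ∫ ω, X (j + 1) ω ∂Q ≤ ε / 2 ^ (j + 2) := by
    intro j Q hQ
    have hms : MeasurableSet {ω | K j ≤ |Z ω|} := measurableSet_le measurable_const hZmeas.abs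
    have hpt : ∀ ω, X (j + 1) ω ≤ Set.indicator {ω | K j ≤ |Z ω|} (fun ω => |Z ω|) ω := by
      intro ω
      rcases le_or_gt (K j) (Z ω) with hz | hz
      · have hmem : ω ∈ {ω | K j ≤ |Z ω|} := by
          simp only [Set.mem_setOf_eq]
          rw [abs_of_nonneg (hZnonneg ω)]
          exact hz
        rw [Set.indicator_of_mem hmem]
        simp only [hXdef, hpKsucc j]
        rw [min_eq_right hz, abs_of_nonneg (hZnonneg ω)]
        have := min_le_left (Z ω) (K (j + 1))
        linarith [hK0 j]
      · have hX0 : X (j + 1) ω = 0 := by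
          have hKj : K j ≤ K (j + 1) := hKmono (Nat.le_succ j)
          simp only [hXdef, hpKsucc j]
          rw [min_eq_left (by linarith : Z ω ≤ K (j + 1)), min_eq_left hz.le, sub_self]
        rw [hX0]
        exact Set.indicator_nonneg (fun ω _ => abs_nonneg _) ω
    calc ∫ ω, X (j + 1) ω ∂Q
        ≤ ∫ ω, Set.indicator {ω | K j ≤ |Z ω|} (fun ω => |Z ω|) ω ∂Q :=
          integral_mono (hXint _ Q hQ) ((hZint Q hQ).abs.indicator hms) hpt
      _ = ∫ ω in {ω | K j ≤ |Z ω|}, |Z ω| ∂Q := integral_indicator hms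
      _ ≤ ε / 2 ^ (j + 2) := htail j Q hQ
  -- essential suprema of conditional expectations of the layers
  have hUex : ∀ j : ℕ, ∃ U : Ω → ℝ, Measurable U ∧ (∀ ω, U ω ∈ Set.Icc 0 (K j)) ∧
      IsEssSupFam P 𝒬 (fun Q => Q[X j | ℱ t]) U := by
    intro j
    refine exists_essSupFam P 𝒬 ⟨Q₀, hQ₀⟩ _ (K j) (hK0 j) (fun Q hQ => ?_) (fun Q hQ => ?_)
    · exact (stronglyMeasurable_condExp.mono hmt).measurable
    · haveI := h𝒬prob Q hQ
      have h1 : 0 ≤ᵐ[Q] Q[X j | ℱ t] := condExp_nonneg (Eventually.of_forall (hXnonneg j))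
      have h2 : Q[X j | ℱ t] ≤ᵐ[Q] (fun _ => K j) := by
        have h3 := condExp_mono (m := ℱ t) (hXint j Q hQ) (integrable_const (K j))
          (Eventually.of_forall (hXle j))
        rwa [condExp_const hmt] at h3
      have h12 : ∀ᵐ ω ∂Q, (Q[X j | ℱ t]) ω ∈ Set.Icc 0 (K j) := by
        filter_upwards [h1, h2] with ω a b
        exact ⟨a, b⟩
      exact h12.filter_mono (h𝒬equiv Q hQ).2.ae_le
  choose U hUmeas hUbd hUfam using hUex
  have hUint : ∀ j, ∀ Q ∈ 𝒬, Integrable (U j) Q := by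
    intro j Q hQ
    haveI := h𝒬prob Q hQ
    refine (integrable_const (K j)).mono' (hUmeas j).aestronglyMeasurable ?_
    filter_upwards with ω
    rw [Real.norm_eq_abs, abs_of_nonneg (hUbd j ω).1]
    exact (hUbd j ω).2
  -- LIE bound on layers
  have hULIE : ∀ j, ∀ Q ∈ 𝒬, ∫ ω, U (j + 1) ω ∂Q ≤ ε / 2 ^ (j + 2) := by
    intro j Q hQ
    have heq := hLIE (X (j + 1)) (hXui (j + 1)) (hXint (j + 1)) (U (j + 1)) (hUfam (j + 1))
    have hδpos : (0 : ℝ) ≤ ε / 2 ^ (j + 2) := by positivity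
    have hbdd : BddAbove (Set.range fun Q : Measure Ω => ⨆ _ : Q ∈ 𝒬, ∫ ω, U (j + 1) ω ∂Q) := by
      refine ⟨max (K (j + 1)) 0, ?_⟩
      rintro x ⟨Q', rfl⟩
      refine Real.iSup_le (fun hQ' => ?_) (le_max_right _ _)
      haveI := h𝒬prob Q' hQ'
      refine le_trans ?_ (le_max_left _ _)
      calc ∫ ω, U (j + 1) ω ∂Q'
          ≤ ∫ _, K (j + 1) ∂Q' :=
            integral_mono (hUint _ Q' hQ') (integrable_const _) (fun ω => (hUbd (j + 1) ω).2)
        _ = K (j + 1) := by simp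
    haveI : Nonempty (Q ∈ 𝒬) := ⟨hQ⟩
    calc ∫ ω, U (j + 1) ω ∂Q = ⨆ _ : Q ∈ 𝒬, ∫ ω, U (j + 1) ω ∂Q := ciSup_const.symm
      _ ≤ ⨆ Q ∈ 𝒬, ∫ ω, U (j + 1) ω ∂Q := le_ciSup hbdd Q
      _ = ⨆ Q ∈ 𝒬, ∫ ω, X (j + 1) ω ∂Q := heq
      _ ≤ ε / 2 ^ (j + 2) :=
          Real.iSup_le (fun Q' => Real.iSup_le (fun hQ' => hXbound j Q' hQ') hδpos) hδpos
  -- tail sum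
  set Wtop : Ω → ENNReal := fun ω => ∑' j : ℕ, ENNReal.ofReal (U (j + 1) ω) with hWtopdef
  have hWtopmeas : Measurable Wtop :=
    Measurable.ennreal_tsum (fun j => (hUmeas (j + 1)).ennreal_ofReal)
  have hgeom : ∀ n : ℕ, ∑ i ∈ Finset.range n, ε / 2 ^ (i + 2) ≤ ε / 2 := by
    intro n
    have h1 : ∀ i ∈ Finset.range n, ε / 2 ^ (i + 2) = ε / 4 * (1 / 2) ^ i := by
      intro i _
      rw [div_pow, one_pow, pow_add]
      norm_num
      ring
    rw [Finset.sum_congr rfl h1, ← Finset.mul_sum]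
    have h2 := sum_geometric_two_le n
    nlinarith [hε.le]
  have hWtoplint : ∀ Q ∈ 𝒬, ∫⁻ ω, Wtop ω ∂Q ≤ ENNReal.ofReal (ε / 2) := by
    intro Q hQ
    haveI := h𝒬prob Q hQ
    rw [hWtopdef]
    rw [lintegral_tsum (fun j => ((hUmeas (j + 1)).ennreal_ofReal).aemeasurable)]
    have hterm : ∀ j : ℕ, ∫⁻ ω, ENNReal.ofReal (U (j + 1) ω) ∂Q ≤ ENNReal.ofReal (ε / 2 ^ (j + 2)) := by
      intro j
      rw [← ofReal_integral_eq_lintegral_ofReal (hUint (j + 1) Q hQ)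
        (Eventually.of_forall fun ω => (hUbd (j + 1) ω).1)]
      exact ENNReal.ofReal_le_ofReal (hULIE j Q hQ)
    calc ∑' j : ℕ, ∫⁻ ω, ENNReal.ofReal (U (j + 1) ω) ∂Q
        ≤ ∑' j : ℕ, ENNReal.ofReal (ε / 2 ^ (j + 2)) := ENNReal.tsum_le_tsum hterm
      _ ≤ ENNReal.ofReal (ε / 2) := by
          rw [ENNReal.tsum_eq_iSup_sum]
          refine iSup_le fun s => ?_
          obtain ⟨n, hn⟩ := s.exists_nat_subset_range
          refine le_trans (Finset.sum_le_sum_of_subset hn) ?_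
          rw [← ENNReal.ofReal_sum_of_nonneg (fun i _ => by positivity)]
          exact ENNReal.ofReal_le_ofReal (hgeom n)
  set Wt : Ω → ℝ := fun ω => (Wtop ω).toReal with hWtdef
  have hWtmeas : Measurable Wt := hWtopmeas.ennreal_toReal
  have hWtnn : ∀ ω, 0 ≤ Wt ω := fun ω => ENNReal.toReal_nonneg
  have hWtint : ∀ Q ∈ 𝒬, Integrable Wt Q := fun Q hQ =>
    integrable_toReal_of_lintegral_ne_top hWtopmeas.aemeasurable
      (lt_of_le_of_lt (hWtoplint Q hQ) ENNReal.ofReal_lt_top).ne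
  have hWtval : ∀ Q ∈ 𝒬, ∫ ω, Wt ω ∂Q ≤ ε / 2 := by
    intro Q hQ
    have hfin : ∀ᵐ ω ∂Q, Wtop ω < ⊤ :=
      ae_lt_top hWtopmeas (lt_of_le_of_lt (hWtoplint Q hQ) ENNReal.ofReal_lt_top).ne
    rw [hWtdef]
    rw [integral_toReal hWtopmeas.aemeasurable hfin]
    calc (∫⁻ ω, Wtop ω ∂Q).toReal ≤ (ENNReal.ofReal (ε / 2)).toReal :=
        ENNReal.toReal_mono ENNReal.ofReal_ne_top (hWtoplint Q hQ)
      _ = ε / 2 := ENNReal.toReal_ofReal (by positivity)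
  -- telescoping
  have hmin_sum : ∀ J : ℕ, ∀ ω, ∑ j ∈ Finset.range (J + 1), X j ω = min (Z ω) (K J) := by
    intro J ω
    induction J with
    | zero =>
      simp only [Finset.sum_range_one, hXdef, hpKdef]
      simp [min_eq_right (hZnonneg ω)]
    | succ J ih =>
      rw [Finset.sum_range_succ, ih]
      simp only [hXdef, hpKsucc J]
      ring
  -- key upper bound: every conditional expectation of Z is ≤ U 0 + Wt a.e.
  have hcondle : ∀ Q ∈ 𝒬, Q[Z | ℱ t] ≤ᵐ[P] fun ω => U 0 ω + Wt ω := by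
    intro Q hQ
    haveI := h𝒬prob Q hQ
    have hminint : ∀ J : ℕ, Integrable (fun ω => min (Z ω) (K J)) Q := by
      intro J
      refine (integrable_const (K J)).mono'
        ((hZmeas.min measurable_const).aestronglyMeasurable) ?_
      filter_upwards with ω
      rw [Real.norm_eq_abs, abs_of_nonneg (le_min (hZnonneg ω) (hK0 J))]
      exact min_le_right _ _
    have hRfint : ∀ J : ℕ, Integrable (fun ω => max (Z ω - K J) 0) Q := by
      intro J
      refine (hZint Q hQ).mono'
        (((hZmeas.sub measurable_const).max measurable_const).aestronglyMeasurable) ?_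
      filter_upwards with ω
      rw [Real.norm_eq_abs, abs_of_nonneg (le_max_right _ _)]
      exact max_le (by linarith [hK0 J]) (hZnonneg ω)
    have hRnn : ∀ J : ℕ, 0 ≤ᵐ[Q] Q[(fun ω => max (Z ω - K J) 0) | ℱ t] :=
      fun J => condExp_nonneg (Eventually.of_forall fun ω => le_max_right _ _)
    have hRint : ∀ J : ℕ, ∫ ω, (Q[(fun ω => max (Z ω - K J) 0) | ℱ t]) ω ∂Q ≤ ε / 2 ^ (J + 2) := by
      intro J
      rw [integral_condExp hmt]
      have hms : MeasurableSet {ω | K J ≤ |Z ω|} := measurableSet_le measurable_const hZmeas.abs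
      have hpt : ∀ ω, max (Z ω - K J) 0 ≤ Set.indicator {ω | K J ≤ |Z ω|} (fun ω => |Z ω|) ω := by
        intro ω
        rcases le_or_gt (K J) (Z ω) with hz | hz
        · have hmem : ω ∈ {ω | K J ≤ |Z ω|} := by
            simp only [Set.mem_setOf_eq]
            rw [abs_of_nonneg (hZnonneg ω)]
            exact hz
          rw [Set.indicator_of_mem hmem, abs_of_nonneg (hZnonneg ω)]
          exact max_le (by linarith [hK0 J]) (hZnonneg ω)
        · rw [max_eq_right (by linarith)]
          exact Set.indicator_nonneg (fun ω _ => abs_nonneg _) ω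
      calc ∫ ω, max (Z ω - K J) 0 ∂Q
          ≤ ∫ ω, Set.indicator {ω | K J ≤ |Z ω|} (fun ω => |Z ω|) ω ∂Q :=
            integral_mono (hRfint J) ((hZint Q hQ).abs.indicator hms) hpt
        _ = ∫ ω in {ω | K J ≤ |Z ω|}, |Z ω| ∂Q := integral_indicator hms
        _ ≤ ε / 2 ^ (J + 2) := htail J Q hQ
    have hdecomp : ∀ J : ℕ, Q[Z | ℱ t] =ᵐ[Q]
        Q[(fun ω => min (Z ω) (K J)) | ℱ t] + Q[(fun ω => max (Z ω - K J) 0) | ℱ t] := by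
      intro J
      have hzeq : Z = (fun ω => min (Z ω) (K J)) + (fun ω => max (Z ω - K J) 0) := by
        funext ω
        simp only [Pi.add_apply]
        rcases le_total (Z ω) (K J) with h | h
        · rw [min_eq_left h, max_eq_right (by linarith)]
          ring
        · rw [min_eq_right h, max_eq_left (by linarith)]
          ring
      calc Q[Z | ℱ t] = Q[(fun ω => min (Z ω) (K J)) + (fun ω => max (Z ω - K J) 0) | ℱ t] := by
            rw [← hzeq]
        _ =ᵐ[Q] _ := condExp_add (hminint J) (hRfint J) _
    have hcondsum : ∀ J : ℕ, Q[(fun ω => min (Z ω) (K J)) | ℱ t] ≤ᵐ[Q]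
        fun ω => ∑ j ∈ Finset.range (J + 1), U j ω := by
      intro J
      have hfeq : (fun ω => min (Z ω) (K J)) = ∑ j ∈ Finset.range (J + 1), X j := by
        funext ω
        rw [Finset.sum_apply]
        exact (hmin_sum J ω).symm
      rw [hfeq]
      have h1 := condExp_finsetSum (μ := Q) (m := ℱ t) (s := Finset.range (J + 1))
        (f := X) (fun j _ => hXint j Q hQ)
      have h2 : ∀ᵐ ω ∂Q, ∀ j, (Q[X j | ℱ t]) ω ≤ U j ω := by
        rw [ae_all_iff]
        exact fun j => ((hUfam j).1 Q hQ).filter_mono (h𝒬equiv Q hQ).1.ae_le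
      filter_upwards [h1, h2] with ω hω hω2
      rw [hω, Finset.sum_apply]
      exact Finset.sum_le_sum fun j _ => hω2 j
    -- remainder goes to zero
    have hRtop0 : ∀ᵐ ω ∂Q, (⨅ J : ℕ, ENNReal.ofReal ((Q[(fun ω => max (Z ω - K J) 0) | ℱ t]) ω)) = 0 := by
      have hRtopmeas : Measurable fun ω =>
          ⨅ J : ℕ, ENNReal.ofReal ((Q[(fun ω => max (Z ω - K J) 0) | ℱ t]) ω) :=
        Measurable.iInf fun J => ((stronglyMeasurable_condExp.mono hmt).measurable).ennreal_ofReal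
      have h0 : ∫⁻ ω, (⨅ J : ℕ, ENNReal.ofReal ((Q[(fun ω => max (Z ω - K J) 0) | ℱ t]) ω)) ∂Q = 0 := by
        refine le_antisymm ?_ zero_le
        have hle : ∀ J : ℕ, ∫⁻ ω, (⨅ J : ℕ, ENNReal.ofReal ((Q[(fun ω => max (Z ω - K J) 0) | ℱ t]) ω)) ∂Q
            ≤ ENNReal.ofReal (ε / 2 ^ (J + 2)) := by
          intro J
          calc ∫⁻ ω, (⨅ J : ℕ, ENNReal.ofReal ((Q[(fun ω => max (Z ω - K J) 0) | ℱ t]) ω)) ∂Q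
              ≤ ∫⁻ ω, ENNReal.ofReal ((Q[(fun ω => max (Z ω - K J) 0) | ℱ t]) ω) ∂Q :=
                lintegral_mono fun ω => iInf_le _ J
            _ = ENNReal.ofReal (∫ ω, (Q[(fun ω => max (Z ω - K J) 0) | ℱ t]) ω ∂Q) :=
                (ofReal_integral_eq_lintegral_ofReal integrable_condExp (hRnn J)).symm
            _ ≤ ENNReal.ofReal (ε / 2 ^ (J + 2)) := ENNReal.ofReal_le_ofReal (hRint J)
        have htendsto : Tendsto (fun J : ℕ => ENNReal.ofReal (ε / 2 ^ (J + 2))) atTop (nhds 0) := by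
          have hh : Tendsto (fun J : ℕ => ε / 2 ^ (J + 2)) atTop (nhds 0) := by
            have hhalf : Tendsto (fun J : ℕ => (1 / 2 : ℝ) ^ J) atTop (nhds 0) :=
              tendsto_pow_atTop_nhds_zero_of_lt_one (by norm_num) (by norm_num)
            have h4 := hhalf.const_mul (ε / 4)
            rw [mul_zero] at h4
            refine h4.congr fun J => ?_
            rw [div_pow, one_pow, pow_add]
            norm_num
            ring
          have h5 := ENNReal.tendsto_ofReal hh
          simpa using h5
        exact ge_of_tendsto' htendsto hle
      rw [lintegral_eq_zero_iff hRtopmeas] at h0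
      filter_upwards [h0] with ω hω using hω
    have hfinae : ∀ᵐ ω ∂Q, Wtop ω < ⊤ :=
      ae_lt_top hWtopmeas (lt_of_le_of_lt (hWtoplint Q hQ) ENNReal.ofReal_lt_top).ne
    have key : Q[Z | ℱ t] ≤ᵐ[Q] fun ω => U 0 ω + Wt ω := by
      filter_upwards [ae_all_iff.mpr hdecomp, ae_all_iff.mpr hcondsum, ae_all_iff.mpr hRnn,
        hRtop0, hfinae] with ω hd hcs hrn hr0 hfin
      refine le_of_forall_pos_le_add fun θ hθ => ?_
      have h1 : (⨅ J : ℕ, ENNReal.ofReal ((Q[(fun ω => max (Z ω - K J) 0) | ℱ t]) ω)) <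
          ENNReal.ofReal θ := by
        rw [hr0]
        exact ENNReal.ofReal_pos.mpr hθ
      obtain ⟨J, hJ⟩ := iInf_lt_iff.mp h1
      have hRJ : (Q[(fun ω => max (Z ω - K J) 0) | ℱ t]) ω < θ :=
        (ENNReal.ofReal_lt_ofReal_iff hθ).mp hJ
      have hsum : (∑ j ∈ Finset.range (J + 1), U j ω) ≤ U 0 ω + Wt ω := by
        rw [Finset.sum_range_succ']
        have h3 : ∑ j ∈ Finset.range J, ENNReal.ofReal (U (j + 1) ω) ≤ Wtop ω :=
          ENNReal.sum_le_tsum _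
        have h4 := ENNReal.toReal_mono hfin.ne h3
        rw [ENNReal.toReal_sum (fun i _ => ENNReal.ofReal_ne_top)] at h4
        have h5 : ∑ j ∈ Finset.range J, U (j + 1) ω ≤ Wt ω := by
          refine le_trans (le_of_eq ?_) h4
          exact (Finset.sum_congr rfl fun i _ =>
            (ENNReal.toReal_ofReal (hUbd (i + 1) ω).1).symm)
        linarith
      have hdω := hd J
      have hcsω := hcs J
      simp only [Pi.add_apply] at hdω
      calc (Q[Z | ℱ t]) ω
          = (Q[(fun ω => min (Z ω) (K J)) | ℱ t]) ω
            + (Q[(fun ω => max (Z ω - K J) 0) | ℱ t]) ω := hdω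
        _ ≤ (∑ j ∈ Finset.range (J + 1), U j ω)
            + (Q[(fun ω => max (Z ω - K J) 0) | ℱ t]) ω := by linarith
        _ ≤ (U 0 ω + Wt ω) + θ := by linarith
    exact key.filter_mono (h𝒬equiv Q hQ).2.ae_le
  -- bound on S
  have hSle : S ≤ᵐ[P] fun ω => U 0 ω + Wt ω := hS.2 _ hcondle
  have hSnn : 0 ≤ᵐ[P] S := by
    haveI := h𝒬prob Q₀ hQ₀
    have h1 : 0 ≤ᵐ[Q₀] Q₀[Z | ℱ t] := condExp_nonneg (Eventually.of_forall hZnonneg)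
    have h2 : 0 ≤ᵐ[P] Q₀[Z | ℱ t] := h1.filter_mono (h𝒬equiv Q₀ hQ₀).2.ae_le
    filter_upwards [h2, hS.1 Q₀ hQ₀] with ω a b using le_trans a b
  have hSabs : ∀ᵐ ω ∂P, |S ω| ≤ K 0 + Wt ω := by
    filter_upwards [hSle, hSnn] with ω h1 h2
    rw [abs_of_nonneg h2]
    exact le_trans h1 (by linarith [(hUbd 0 ω).2])
  -- final threshold
  set Kf : ℝ := max 1 (2 * K 0 * (K 0 + ε / 2) / ε + 1) with hKfdef
  have hKf1 : (1 : ℝ) ≤ Kf := le_max_left _ _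
  have hKfpos : (0 : ℝ) < Kf := lt_of_lt_of_le one_pos hKf1
  refine ⟨Kf, fun Q hQ => ?_⟩
  haveI := h𝒬prob Q hQ
  have hQabs : ∀ᵐ ω ∂Q, |S ω| ≤ K 0 + Wt ω := hSabs.filter_mono (h𝒬equiv Q hQ).1.ae_le
  have hWnn : ∀ ω, 0 ≤ K 0 + Wt ω := fun ω => add_nonneg (hK0 0) (hWtnn ω)
  have hWmeas : Measurable fun ω => K 0 + Wt ω := measurable_const.add hWtmeas
  have hWint : Integrable (fun ω => K 0 + Wt ω) Q := (integrable_const (K 0)).add (hWtint Q hQ)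
  have hlintW : ∫⁻ ω, ENNReal.ofReal (K 0 + Wt ω) ∂Q ≤ ENNReal.ofReal (K 0 + ε / 2) := by
    have hsplit : ∀ ω, ENNReal.ofReal (K 0 + Wt ω) = ENNReal.ofReal (K 0) + ENNReal.ofReal (Wt ω) :=
      fun ω => ENNReal.ofReal_add (hK0 0) (hWtnn ω)
    calc ∫⁻ ω, ENNReal.ofReal (K 0 + Wt ω) ∂Q
        = ∫⁻ ω, (ENNReal.ofReal (K 0) + ENNReal.ofReal (Wt ω)) ∂Q := lintegral_congr hsplit
      _ = ENNReal.ofReal (K 0) * Q Set.univ + ∫⁻ ω, ENNReal.ofReal (Wt ω) ∂Q := by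
          rw [lintegral_add_left measurable_const, lintegral_const]
      _ ≤ ENNReal.ofReal (K 0) + ENNReal.ofReal (ε / 2) := by
          rw [measure_univ, mul_one]
          refine add_le_add le_rfl ?_
          calc ∫⁻ ω, ENNReal.ofReal (Wt ω) ∂Q ≤ ∫⁻ ω, Wtop ω ∂Q :=
              lintegral_mono fun ω => ENNReal.ofReal_toReal_le
            _ ≤ ENNReal.ofReal (ε / 2) := hWtoplint Q hQ
      _ = ENNReal.ofReal (K 0 + ε / 2) := (ENNReal.ofReal_add (hK0 0) (by positivity)).symm
  have hQA : Q {ω | Kf ≤ |S ω|} ≤ ENNReal.ofReal (K 0 + ε / 2) / ENNReal.ofReal Kf := by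
    have hsub : {ω | Kf ≤ |S ω|} ⊆
        {ω | ENNReal.ofReal Kf ≤ ENNReal.ofReal (K 0 + Wt ω)} ∪ {ω | ¬ |S ω| ≤ K 0 + Wt ω} := by
      intro ω hω
      by_cases h : |S ω| ≤ K 0 + Wt ω
      · exact Or.inl (ENNReal.ofReal_le_ofReal (le_trans hω h))
      · exact Or.inr h
    have hnull : Q {ω | ¬ |S ω| ≤ K 0 + Wt ω} = 0 := by
      exact ae_iff.mp hQabs
    have hKfne : ENNReal.ofReal Kf ≠ 0 := by
      simp only [ne_eq, ENNReal.ofReal_eq_zero, not_le]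
      exact hKfpos
    calc Q {ω | Kf ≤ |S ω|}
        ≤ Q ({ω | ENNReal.ofReal Kf ≤ ENNReal.ofReal (K 0 + Wt ω)} ∪ {ω | ¬ |S ω| ≤ K 0 + Wt ω}) :=
          measure_mono hsub
      _ ≤ Q {ω | ENNReal.ofReal Kf ≤ ENNReal.ofReal (K 0 + Wt ω)} + Q {ω | ¬ |S ω| ≤ K 0 + Wt ω} :=
          measure_union_le _ _
      _ = Q {ω | ENNReal.ofReal Kf ≤ ENNReal.ofReal (K 0 + Wt ω)} := by rw [hnull, add_zero]
      _ ≤ ENNReal.ofReal (K 0 + ε / 2) / ENNReal.ofReal Kf := by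
          rw [ENNReal.le_div_iff_mul_le (Or.inl hKfne) (Or.inl ENNReal.ofReal_ne_top)]
          calc Q {ω | ENNReal.ofReal Kf ≤ ENNReal.ofReal (K 0 + Wt ω)} * ENNReal.ofReal Kf
              = ENNReal.ofReal Kf * Q {ω | ENNReal.ofReal Kf ≤ ENNReal.ofReal (K 0 + Wt ω)} :=
                mul_comm _ _
            _ ≤ ∫⁻ ω, ENNReal.ofReal (K 0 + Wt ω) ∂Q :=
                mul_meas_ge_le_lintegral₀ (hWmeas.ennreal_ofReal.aemeasurable) _
            _ ≤ ENNReal.ofReal (K 0 + ε / 2) := hlintW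
  by_cases hIntS : IntegrableOn (fun ω => |S ω|) {ω | Kf ≤ |S ω|} Q
  · have h1 : ∫ ω in {ω | Kf ≤ |S ω|}, |S ω| ∂Q ≤ ∫ ω in {ω | Kf ≤ |S ω|}, (K 0 + Wt ω) ∂Q := by
      refine integral_mono_ae hIntS hWint.integrableOn ?_
      exact hQabs.filter_mono (ae_mono Measure.restrict_le_self)
    have h2 : ∫ ω in {ω | Kf ≤ |S ω|}, (K 0 + Wt ω) ∂Q
        = (Q {ω | Kf ≤ |S ω|}).toReal * K 0 + ∫ ω in {ω | Kf ≤ |S ω|}, Wt ω ∂Q := by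
      rw [integral_add (integrable_const (K 0)).integrableOn (hWtint Q hQ).integrableOn]
      congr 1
      rw [integral_const, measureReal_restrict_apply_univ, smul_eq_mul, measureReal_def]
    have h3 : ∫ ω in {ω | Kf ≤ |S ω|}, Wt ω ∂Q ≤ ε / 2 :=
      le_trans (setIntegral_le_integral (hWtint Q hQ) (Eventually.of_forall hWtnn)) (hWtval Q hQ)
    have h4 : (Q {ω | Kf ≤ |S ω|}).toReal ≤ (K 0 + ε / 2) / Kf := by
      have hne : ENNReal.ofReal (K 0 + ε / 2) / ENNReal.ofReal Kf ≠ ⊤ := by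
        refine (ENNReal.div_lt_top ENNReal.ofReal_ne_top ?_).ne
        simp only [ne_eq, ENNReal.ofReal_eq_zero, not_le]
        exact hKfpos
      have h5 := ENNReal.toReal_mono hne hQA
      rwa [ENNReal.toReal_div, ENNReal.toReal_ofReal (by linarith [hK0 0] : (0:ℝ) ≤ K 0 + ε / 2),
        ENNReal.toReal_ofReal hKfpos.le] at h5
    have h5 : (K 0 + ε / 2) / Kf * K 0 ≤ ε / 2 := by
      rw [div_mul_eq_mul_div, div_le_iff₀ hKfpos]
      have hKf2 : 2 * K 0 * (K 0 + ε / 2) / ε + 1 ≤ Kf := le_max_right _ _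
      have hKf2' : 2 * K 0 * (K 0 + ε / 2) + ε ≤ Kf * ε := by
        have h6 := mul_le_mul_of_nonneg_right hKf2 hε.le
        calc 2 * K 0 * (K 0 + ε / 2) + ε = (2 * K 0 * (K 0 + ε / 2) / ε + 1) * ε := by
              field_simp
          _ ≤ Kf * ε := h6
      nlinarith [hK0 0]
    calc ∫ ω in {ω | Kf ≤ |S ω|}, |S ω| ∂Q
        ≤ (Q {ω | Kf ≤ |S ω|}).toReal * K 0 + ∫ ω in {ω | Kf ≤ |S ω|}, Wt ω ∂Q := by
          rw [← h2]; exact h1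
      _ ≤ (K 0 + ε / 2) / Kf * K 0 + ε / 2 :=
          add_le_add (mul_le_mul_of_nonneg_right h4 (hK0 0)) h3
      _ ≤ ε := by linarith
  · rw [integral_undef hIntS]
    exact hε.le
end
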